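/- Let E be a pseudo-effect algebra. Then E is weakly commutative (i.e., for all a,b ∈ E, a+b exists iff b+a exists) if and only if for every a ∈ E, the left complement a⁻ equals the right complement a~. -/
import Mathlib


/-- A pseudo-effect algebra (PEA): a structure with a partial addition `add`
(with domain of definition `D`), a zero and a one, satisfying (PE1)-(PE4)
together with the (derivable) neutrality of zero. -/
structure PEA (E : Type) where
  /-- `D a b` means that the partial sum `a + b` is defined. -/
  D : E → E → Prop
  /-- The partial addition (its value is relevant only when `D a b` holds). -/
  add : E → E → E
  zero : E
  one : E
  /-- (PE1), definedness part. -/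
  assoc_defined : ∀ a b c, (D a b ∧ D (add a b) c) ↔ (D b c ∧ D a (add b c))
  /-- (PE1), equality part. -/
  assoc_eq : ∀ a b c, D a b → D (add a b) c → add (add a b) c = add a (add b c)
  /-- (PE2), right complement. -/
  compl_right : ∀ a, ∃! d, D a d ∧ add a d = one
  /-- (PE2), left complement. -/
  compl_left : ∀ a, ∃! e, D e a ∧ add e a = one
  /-- (PE3). -/
  pe3 : ∀ a b, D a b →
    (∃ d, D d a ∧ add d a = add a b) ∧ (∃ e, D b e ∧ add b e = add a b)
  /-- (PE4). -/
  pe4_right : ∀ a, D a one → a = zero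
  pe4_left : ∀ a, D one a → a = zero
  D_zero_right : ∀ a, D a zero
  D_zero_left : ∀ a, D zero a
  add_zero : ∀ a, add a zero = a
  zero_add : ∀ a, add zero a = a

namespace PEA

variable {E : Type} (P : PEA E)

/-- The induced partial order: `a ≤ b` iff `a + c = b` for some `c`. -/
def le (a b : E) : Prop := ∃ c, P.D a c ∧ P.add a c = b

/-- The left complement `a⁻`, the unique element with `a⁻ + a = 1`. -/
noncomputable def lneg (a : E) : E := (P.compl_left a).choose

/-- The right complement `a~`, the unique element with `a + a~ = 1`. -/
noncomputable def rneg (a : E) : E := (P.compl_right a).choose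

/-- `E` is weakly commutative if `a + b` is defined iff `b + a` is defined. -/
def WeaklyCommutative : Prop := ∀ a b, P.D a b ↔ P.D b a

/-- `E` is symmetric if the two complements coincide. -/
def Symmetric : Prop := ∀ a, P.lneg a = P.rneg a

/-- A state on a PEA: a `[0,1]`-valued map, additive on existing sums, sending
`0 ↦ 0` and `1 ↦ 1`. -/
def IsState (s : E → ℝ) : Prop :=
  s P.zero = 0 ∧ s P.one = 1 ∧ (∀ a, 0 ≤ s a ∧ s a ≤ 1) ∧
    ∀ a b, P.D a b → s (P.add a b) = s a + s b

/-- An `(n+1)`-valued discrete state: a state whose range is `{0, 1/n, …, 1}`. -/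
def IsDiscreteState (n : ℕ) (s : E → ℝ) : Prop :=
  P.IsState s ∧ Set.range s = {x : ℝ | ∃ i ≤ n, x = (i : ℝ) / n}

/-- An ideal: a nonempty downward closed subset closed under existing sums. -/
def IsIdeal (I : Set E) : Prop :=
  I.Nonempty ∧ (∀ a i, i ∈ I → P.le a i → a ∈ I) ∧
    ∀ i j, i ∈ I → j ∈ I → P.D i j → P.add i j ∈ I

/-- A normal ideal: `a + i = j + a` implies `i ∈ I ↔ j ∈ I`. -/
def IsNormalIdeal (I : Set E) : Prop :=
  P.IsIdeal I ∧ ∀ a i j, P.D a i → P.D j a → P.add a i = P.add j a → (i ∈ I ↔ j ∈ I)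

/-- A maximal ideal: proper and not properly contained in a proper ideal. -/
def IsMaximalIdeal (I : Set E) : Prop :=
  P.IsIdeal I ∧ P.one ∉ I ∧ ∀ J, P.IsIdeal J → P.one ∉ J → I ⊆ J → I = J

/-- `n`-fold partial multiple of an element. -/
def nmul : ℕ → E → E
  | 0, _ => P.zero
  | k + 1, a => P.add (nmul k a) a

/-- Definedness of the `n`-fold partial multiple. -/
def nmulD : ℕ → E → Prop
  | 0, _ => True
  | k + 1, a => nmulD k a ∧ P.D (P.nmul k a) a

/-- The set of elements of infinite isotropic index. -/
def Infinit : Set E := {a | ∀ k, P.nmulD k a}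

/-- An `n`-decomposition of a PEA. -/
def IsNDecomp (n : ℕ) (F : ℕ → Set E) : Prop :=
  (∀ i, i ≤ n → (F i).Nonempty) ∧
  (∀ i j, i ≤ n → j ≤ n → i ≠ j → F i ∩ F j = ∅) ∧
  ((⋃ i ∈ Set.Iic n, F i) = Set.univ) ∧
  (∀ i, i ≤ n → P.lneg '' F i = F (n - i) ∧ P.rneg '' F i = F (n - i)) ∧
  (∀ i j, i ≤ n → j ≤ n → ∀ x ∈ F i, ∀ y ∈ F j, P.D x y →
     i + j ≤ n ∧ P.add x y ∈ F (i + j))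

/-- An `n`-perfect PEA: an `n`-decomposition with all sums `Eᵢ + Eⱼ`, `i+j < n`,
existing, and whose bottom slice is the unique maximal ideal. -/
def IsNPerfect (n : ℕ) (F : ℕ → Set E) : Prop :=
  P.IsNDecomp n F ∧
  (∀ i j, i + j < n → ∀ x ∈ F i, ∀ y ∈ F j, P.D x y) ∧
  (P.IsMaximalIdeal (F 0) ∧ ∀ J, P.IsMaximalIdeal J → J = F 0)

lemma rneg_spec (a : E) : P.D a (P.rneg a) ∧ P.add a (P.rneg a) = P.one :=
  (P.compl_right a).choose_spec.1

lemma rneg_unique {a d : E} (h1 : P.D a d) (h2 : P.add a d = P.one) :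
    d = P.rneg a :=
  (P.compl_right a).choose_spec.2 d ⟨h1, h2⟩

lemma lneg_spec (a : E) : P.D (P.lneg a) a ∧ P.add (P.lneg a) a = P.one :=
  (P.compl_left a).choose_spec.1

lemma lneg_unique {a d : E} (h1 : P.D d a) (h2 : P.add d a = P.one) :
    d = P.lneg a :=
  (P.compl_left a).choose_spec.2 d ⟨h1, h2⟩

/-- Cancellation: `a + x = a` implies `x = 0`. -/
lemma add_self_cancel {a x : E} (h1 : P.D a x) (h2 : P.add a x = a) :
    x = P.zero := by
  obtain ⟨hr, hr1⟩ := P.rneg_spec a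
  have har : P.D (P.add a x) (P.rneg a) := by rw [h2]; exact hr
  obtain ⟨hxr, haxr⟩ := (P.assoc_defined a x (P.rneg a)).1 ⟨h1, har⟩
  have e1 : P.add a (P.add x (P.rneg a)) = P.one := by
    rw [← P.assoc_eq a x (P.rneg a) h1 har, h2, hr1]
  have e2 : P.add x (P.rneg a) = P.rneg a := P.rneg_unique haxr e1
  obtain ⟨hs, hs1⟩ := P.rneg_spec (P.rneg a)
  have h3 : P.D (P.add x (P.rneg a)) (P.rneg (P.rneg a)) := by rw [e2]; exact hs
  obtain ⟨_, hx1⟩ := (P.assoc_defined x (P.rneg a) (P.rneg (P.rneg a))).1 ⟨hxr, h3⟩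
  rw [hs1] at hx1
  exact P.pe4_right x hx1

/-- `D a b` implies `b ≤ a~`. -/
lemma le_rneg_of_D {a b : E} (h : P.D a b) : P.le b (P.rneg a) := by
  obtain ⟨hc, hc1⟩ := P.rneg_spec (P.add a b)
  obtain ⟨hbc, habc⟩ := (P.assoc_defined a b (P.rneg (P.add a b))).1 ⟨h, hc⟩
  exact ⟨_, hbc, P.rneg_unique habc
    (by rw [← P.assoc_eq a b _ h hc, hc1])⟩

/-- `D a b` implies `a ≤ b⁻`. -/
lemma le_lneg_of_D {a b : E} (h : P.D a b) : P.le a (P.lneg b) := by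
  obtain ⟨hc, hc1⟩ := P.lneg_spec (P.add a b)
  -- c + (a + b) = 1 ; reassociate to (c + a) + b = 1
  obtain ⟨hca, hcab⟩ := (P.assoc_defined (P.lneg (P.add a b)) a b).2 ⟨h, hc⟩
  have e1 : P.add (P.add (P.lneg (P.add a b)) a) b = P.one := by
    rw [P.assoc_eq _ a b hca hcab, hc1]
  have e2 : P.add (P.lneg (P.add a b)) a = P.lneg b := P.lneg_unique hcab e1
  obtain ⟨_, e, he, he1⟩ := P.pe3 _ a hca
  exact ⟨e, he, by rw [he1, e2]⟩

/-- `b ≤ a~` implies `D a b`. -/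
lemma D_of_le_rneg {a b : E} (h : P.le b (P.rneg a)) : P.D a b := by
  obtain ⟨c, hbc, hc⟩ := h
  have : P.D a (P.add b c) := by rw [hc]; exact (P.rneg_spec a).1
  exact ((P.assoc_defined a b c).2 ⟨hbc, this⟩).1

/-- `a ≤ b⁻` implies `D a b`. -/
lemma D_of_le_lneg {a b : E} (h : P.le a (P.lneg b)) : P.D a b := by
  obtain ⟨c, hac, hc⟩ := h
  obtain ⟨⟨d, hda, hd⟩, _⟩ := P.pe3 a c hac
  have h1 : P.D (P.add d a) b := by rw [hd, hc]; exact (P.lneg_spec b).1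
  exact ((P.assoc_defined d a b).1 ⟨hda, h1⟩).1

lemma le_antisymm' {a b : E} (h1 : P.le a b) (h2 : P.le b a) : a = b := by
  obtain ⟨c, hac, hc⟩ := h1
  obtain ⟨d, hbd, hd⟩ := h2
  have h3 : P.D (P.add a c) d := by rw [hc]; exact hbd
  obtain ⟨hcd, hacd⟩ := (P.assoc_defined a c d).1 ⟨hac, h3⟩
  have e1 : P.add a (P.add c d) = a := by
    rw [← P.assoc_eq a c d hac h3, hc, hd]
  have e2 : P.add c d = P.zero := P.add_self_cancel hacd e1
  have h4 : P.D (P.add c d) P.one := by rw [e2]; exact P.D_zero_left P.one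
  have hd0 : d = P.zero := P.pe4_right d ((P.assoc_defined c d P.one).1 ⟨hcd, h4⟩).1
  have hc0 : c = P.zero := by rw [← e2, hd0, P.add_zero]
  rw [← hc, hc0, P.add_zero]

end PEA

/-- A pseudo-effect algebra is weakly commutative iff the left
complement coincides with the right complement for every element. -/
theorem stmt0 {E : Type} (P : PEA E) :
    P.WeaklyCommutative ↔ ∀ a : E, P.lneg a = P.rneg a := by
  constructor
  · intro h a
    have d1 : P.D a (P.lneg a) := (h _ _).2 (P.lneg_spec a).1
    have d2 : P.D (P.rneg a) a := (h _ _).2 (P.rneg_spec a).1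
    exact P.le_antisymm' (P.le_rneg_of_D d1) (P.le_lneg_of_D d2)
  · intro h a b
    have key : ∀ x y : E, P.D x y → P.D y x := by
      intro x y hd
      refine P.D_of_le_rneg ?_
      rw [← h]
      exact P.le_lneg_of_D hd
    exact ⟨key a b, key b a⟩
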